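/- Let A₁ and A₂ be regular wiretap sets in a finite directed acyclic graph with source s. Then the equivalence class of A₁ is dominated by the equivalence class of A₂ (Cl(A₁) ≺ Cl(A₂)) if and only if A₁ ≺ A₂. -/

import Mathlib

open Finset

/-- Consecutive edges in the list match head-to-tail. -/
def EChain {V E : Type*} (tl hd : E → V) (p : List E) : Prop :=
  p.Chain' (fun d e => hd d = tl e)

/-- A (nonempty) directed path of edges starting at node `s`. -/
def PathFrom {V E : Type*} (tl hd : E → V) (s : V) (p : List E) : Prop :=
  p ≠ [] ∧ EChain tl hd p ∧ ∀ e ∈ p.head?, tl e = s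

/-- The directed graph is acyclic: no nonempty edge-chain returns to its start. -/
def Acyclic {V E : Type*} (tl hd : E → V) : Prop :=
  ∀ p : List E, p ≠ [] → EChain tl hd p →
    ∀ d ∈ p.head?, ∀ e ∈ p.getLast?, hd e ≠ tl d

/-- `B` separates the edge set `A` from `s`: every directed path from `s`
ending with an edge of `A` passes through an edge of `B` (i.e. `B` is a cut
between `s` and `A`). -/
def Separates {V E : Type*} (tl hd : E → V) (s : V) (A B : Finset E) : Prop :=
  ∀ p : List E, PathFrom tl hd s p → (∃ e ∈ p.getLast?, e ∈ A) → ∃ b ∈ B, b ∈ p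

/-- The minimum cut capacity between `s` and the edge set `A`. -/
noncomputable def mincut {V E : Type*} [Fintype E] (tl hd : E → V) (s : V)
    (A : Finset E) : ℕ :=
  sInf {n | ∃ B : Finset E, Separates tl hd s A B ∧ B.card = n}

/-- `B` is a minimum cut between `s` and the edge set `A`. -/
def IsMinCut {V E : Type*} [Fintype E] (tl hd : E → V) (s : V) (A B : Finset E) : Prop :=
  Separates tl hd s A B ∧ B.card = mincut tl hd s A

/-- An edge set is regular if its cardinality equals its minimum cut capacity from `s`. -/
def Regular {V E : Type*} [Fintype E] (tl hd : E → V) (s : V) (A : Finset E) : Prop :=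
  A.card = mincut tl hd s A

/-- `A ∼ A'`: the two edge sets have a common minimum cut from `s`. -/
def EquivSets {V E : Type*} [Fintype E] (tl hd : E → V) (s : V) (A A' : Finset E) : Prop :=
  ∃ C : Finset E, IsMinCut tl hd s A C ∧ IsMinCut tl hd s A' C

/-- `A₁ ≺ A₂`: `|A₁| < |A₂|` and some minimum cut between `s` and `A₂`
also separates `A₁` from `s`. -/
def Dominates {V E : Type*} [Fintype E] (tl hd : E → V) (s : V) (A₁ A₂ : Finset E) : Prop :=
  A₁.card < A₂.card ∧
    ∃ C : Finset E, IsMinCut tl hd s A₂ C ∧ Separates tl hd s A₁ C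

/-- A directed path of edges from node `s` to node `t`. -/
def NPathFromTo {V E : Type*} (tl hd : E → V) (s t : V) (p : List E) : Prop :=
  PathFrom tl hd s p ∧ ∀ e ∈ p.getLast?, hd e = t

/-- `B` is a cut between the nodes `s` and `t`. -/
def NSeparates {V E : Type*} (tl hd : E → V) (s t : V) (B : Finset E) : Prop :=
  ∀ p : List E, NPathFromTo tl hd s t p → ∃ b ∈ B, b ∈ p

/-- The minimum cut capacity between the nodes `s` and `t`. -/
noncomputable def nmincut {V E : Type*} [Fintype E] (tl hd : E → V) (s t : V) : ℕ :=
  sInf {n | ∃ B : Finset E, NSeparates tl hd s t B ∧ B.card = n}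

/-- `B` is a minimum cut between the nodes `s` and `t`. -/
def IsNodeMinCut {V E : Type*} [Fintype E] (tl hd : E → V) (s t : V) (B : Finset E) : Prop :=
  NSeparates tl hd s t B ∧ B.card = nmincut tl hd s t

/-- `d ≤ e` for edges: there is a directed path starting with `d` and ending with `e`
(in particular `d ≤ d`). -/
def EdgeLe {V E : Type*} (tl hd : E → V) (d e : E) : Prop :=
  ∃ p : List E, EChain tl hd p ∧ p.head? = some d ∧ p.getLast? = some e

/-- A family of pairwise edge-disjoint paths. -/
def EdgeDisjoint {E : Type*} {n : ℕ} (P : Fin n → List E) : Prop :=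
  ∀ i j, i ≠ j → List.Disjoint (P i) (P j)

/-- The primary minimum cut between nodes `s` and `t`: a minimum cut separating
every minimum cut between `s` and `t` from `s`. -/
def IsPrimaryNodeMinCut {V E : Type*} [Fintype E] (tl hd : E → V) (s t : V)
    (C : Finset E) : Prop :=
  IsNodeMinCut tl hd s t C ∧
    ∀ C' : Finset E, IsNodeMinCut tl hd s t C' → Separates tl hd s C' C

/-- The primary minimum cut between `s` and an edge set `A`. -/
def IsPrimaryMinCut {V E : Type*} [Fintype E] (tl hd : E → V) (s : V)
    (A C : Finset E) : Prop :=
  IsMinCut tl hd s A C ∧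
    ∀ C' : Finset E, IsMinCut tl hd s A C' → Separates tl hd s C' C

/-- The equivalence class (within the collection `𝒜`) of the wiretap set `A`
under the relation `∼`. -/
def ClassOf {V E : Type*} [Fintype E] (tl hd : E → V) (s : V)
    (𝒜 : Finset (Finset E)) (A : Finset E) : Set (Finset E) :=
  {A' | A' ∈ 𝒜 ∧ EquivSets tl hd s A A'}

/-- Domination amongst (distinct) equivalence classes: some common minimum cut of all
the sets in `C₂` separates every set in `C₁` from `s`. -/
def ClDominates {V E : Type*} [Fintype E] (tl hd : E → V) (s : V)
    (C₁ C₂ : Set (Finset E)) : Prop :=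
  C₁ ≠ C₂ ∧ ∃ CUT : Finset E,
    (∀ A ∈ C₂, IsMinCut tl hd s A CUT) ∧ (∀ A ∈ C₁, Separates tl hd s A CUT)

section Helpers
variable {V E : Type*} {tl hd : E → V} {s : V}

lemma separates_self (A : Finset E) : Separates tl hd s A A := by
  rintro p hp ⟨e, he, heA⟩
  exact ⟨e, heA, List.mem_of_mem_getLast? he⟩

lemma first_split {U : Finset E} [DecidableEq E] {p : List E} (h : ∃ x ∈ p, x ∈ U) :
    ∃ l₁ b l₂, p = l₁ ++ b :: l₂ ∧ b ∈ U ∧ ∀ x ∈ l₁, x ∉ U := by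
  induction p with
  | nil => obtain ⟨x, hx, _⟩ := h; cases hx
  | cons a q ih =>
    by_cases ha : a ∈ U
    · exact ⟨[], a, q, rfl, ha, by simp⟩
    · obtain ⟨x, hx, hxU⟩ := h
      have hxq : x ∈ q := by
        rcases List.mem_cons.mp hx with h | h
        · exact absurd (h ▸ hxU) ha
        · exact h
      obtain ⟨l₁, b, l₂, he, hb, hl⟩ := ih ⟨x, hxq, hxU⟩
      refine ⟨a :: l₁, b, l₂, by rw [he]; rfl, hb, ?_⟩
      rintro y hy
      rcases List.mem_cons.mp hy with h | h
      · exact h ▸ ha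
      · exact hl y h

lemma last_split {U : Finset E} [DecidableEq E] {p : List E} (h : ∃ x ∈ p, x ∈ U) :
    ∃ l₁ b l₂, p = l₁ ++ b :: l₂ ∧ b ∈ U ∧ ∀ x ∈ l₂, x ∉ U := by
  induction p with
  | nil => obtain ⟨x, hx, _⟩ := h; cases hx
  | cons a q ih =>
    by_cases hq : ∃ x ∈ q, x ∈ U
    · obtain ⟨l₁, b, l₂, he, hb, hl⟩ := ih hq
      exact ⟨a :: l₁, b, l₂, by rw [he]; rfl, hb, hl⟩
    · push_neg at hq
      obtain ⟨x, hx, hxU⟩ := h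
      have hxa : x = a := by
        rcases List.mem_cons.mp hx with h | h
        · exact h
        · exact absurd hxU (hq x h)
      exact ⟨[], a, q, rfl, hxa ▸ hxU, hq⟩

lemma pathFrom_prefix {p l₁ l₂ : List E} {b : E} (hp : PathFrom tl hd s p)
    (he : p = l₁ ++ b :: l₂) : PathFrom tl hd s (l₁ ++ [b]) := by
  obtain ⟨hne, hch, hhd⟩ := hp
  have he2 : p = (l₁ ++ [b]) ++ l₂ := by simp [he]
  refine ⟨by simp, (List.isChain_append.mp (he2 ▸ hch)).1, ?_⟩
  intro e hee
  apply hhd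
  rw [he2]
  rcases l₁ with _ | ⟨a, t⟩ <;> simpa using hee

lemma pathFrom_splice {q l₂ : List E} {b : E} (hq : PathFrom tl hd s q)
    (hlast : q.getLast? = some b) (hch : EChain tl hd (b :: l₂)) :
    PathFrom tl hd s (q ++ l₂) ∧ (q ++ l₂).getLast? = (b :: l₂).getLast? := by
  obtain ⟨hne, hchq, hhd⟩ := hq
  have hch2 := List.isChain_cons.mp hch
  constructor
  · refine ⟨by simp [hne], List.isChain_append.mpr ⟨hchq, hch2.2, ?_⟩, ?_⟩
    · intro x hx y hy
      rw [hlast] at hx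
      simp only [Option.mem_def, Option.some.injEq] at hx
      exact hx ▸ hch2.1 y hy
    · intro e hee
      apply hhd
      rcases q with _ | ⟨a, t⟩
      · exact absurd rfl hne
      · simpa using hee
  · rcases l₂ with _ | ⟨c, t⟩
    · simpa using hlast
    · rw [List.getLast?_append]
      have : (c :: t).getLast? = some ((c :: t).getLast (by simp)) :=
        List.getLast?_eq_getLast _
      simp [this]

lemma sep_trans {A B C : Finset E} (hAB : Separates tl hd s A B)
    (hBC : Separates tl hd s B C) : Separates tl hd s A C := by
  intro p hp hlast
  obtain ⟨b, hbB, hbp⟩ := hAB p hp hlast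
  obtain ⟨l₁, l₂, he⟩ := List.append_of_mem hbp
  have hpre := pathFrom_prefix hp he
  obtain ⟨c, hcC, hcq⟩ := hBC _ hpre ⟨b, by simp [List.getLast?_concat], hbB⟩
  refine ⟨c, hcC, ?_⟩
  rw [he]
  rcases List.mem_append.mp hcq with h | h
  · exact List.mem_append.mpr (Or.inl h)
  · simp only [List.mem_singleton] at h
    exact List.mem_append.mpr (Or.inr (h ▸ List.mem_cons_self))

variable (tl hd s) in
noncomputable def Frontier (U : Finset E) : Finset E :=
  @Finset.filter E (fun e : E => ∃ q : List E, PathFrom tl hd s q ∧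
      q.getLast? = some e ∧ ∀ x ∈ q.dropLast, x ∉ U) (Classical.decPred _) U

lemma mem_frontier {U : Finset E} {e : E} :
    e ∈ Frontier tl hd s U ↔ e ∈ U ∧ ∃ q : List E, PathFrom tl hd s q ∧
      q.getLast? = some e ∧ ∀ x ∈ q.dropLast, x ∉ U := by
  rw [Frontier]
  exact @Finset.mem_filter _ _ (Classical.decPred _) _ _

lemma frontier_subset (U : Finset E) : Frontier tl hd s U ⊆ U :=
  fun _ he => (mem_frontier.mp he).1

lemma sep_frontier [DecidableEq E] {X B U : Finset E} (hBU : B ⊆ U)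
    (hsep : Separates tl hd s X B) : Separates tl hd s X (Frontier tl hd s U) := by
  intro p hp hlast
  obtain ⟨b, hbB, hbp⟩ := hsep p hp hlast
  obtain ⟨l₁, c, l₂, he, hcU, hl₁⟩ := first_split ⟨b, hbp, hBU hbB⟩
  refine ⟨c, ?_, by rw [he]; exact List.mem_append.mpr (Or.inr (List.mem_cons_self))⟩
  rw [mem_frontier]
  refine ⟨hcU, l₁ ++ [c], pathFrom_prefix hp he, List.getLast?_concat, ?_⟩
  rw [List.dropLast_concat]
  exact hl₁

lemma join_separates [DecidableEq E] {A B₁ B₂ : Finset E}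
    (h₁ : Separates tl hd s A B₁) (h₂ : Separates tl hd s A B₂) :
    Separates tl hd s A (((B₁ ∪ B₂) \ Frontier tl hd s (B₁ ∪ B₂)) ∪ (B₁ ∩ B₂)) := by
  intro p hp hlast
  by_contra hcon
  push_neg at hcon
  obtain ⟨b, hb, hbp⟩ := h₁ p hp hlast
  obtain ⟨l₁, ℓ, l₂, he, hℓU, hl₂⟩ :=
    last_split (U := B₁ ∪ B₂) ⟨b, hbp, Finset.mem_union_left _ hb⟩
  have hℓp : ℓ ∈ p := by
    rw [he]; exact List.mem_append.mpr (Or.inr (List.mem_cons_self))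
  have hℓF : ℓ ∈ Frontier tl hd s (B₁ ∪ B₂) := by
    by_contra hnF
    exact hcon ℓ (Finset.mem_union_left _ (Finset.mem_sdiff.mpr ⟨hℓU, hnF⟩)) hℓp
  have hℓBB : ℓ ∉ B₁ ∩ B₂ := fun h => hcon ℓ (Finset.mem_union_right _ h) hℓp
  obtain ⟨Bo, hsepo, hℓo, hBoU⟩ :
      ∃ Bo : Finset E, Separates tl hd s A Bo ∧ ℓ ∉ Bo ∧ Bo ⊆ B₁ ∪ B₂ := by
    rcases Finset.mem_union.mp hℓU with h | h
    · exact ⟨B₂, h₂, fun hh => hℓBB (Finset.mem_inter.mpr ⟨h, hh⟩),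
        Finset.subset_union_right⟩
    · exact ⟨B₁, h₁, fun hh => hℓBB (Finset.mem_inter.mpr ⟨hh, h⟩),
        Finset.subset_union_left⟩
  obtain ⟨-, q, hq, hqlast, hqavoid⟩ := mem_frontier.mp hℓF
  have hch : EChain tl hd (ℓ :: l₂) := (List.isChain_append.mp (he ▸ hp.2.1)).2.1
  obtain ⟨hr, hrlast⟩ := pathFrom_splice hq hqlast hch
  have h5 : (ℓ :: l₂).getLast? = some ((ℓ :: l₂).getLast (by simp)) :=
    List.getLast?_eq_getLast _
  have hrA : ∃ e ∈ (q ++ l₂).getLast?, e ∈ A := by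
    obtain ⟨e, hee, heA⟩ := hlast
    refine ⟨e, ?_, heA⟩
    rw [he] at hee
    rw [hrlast, h5]
    rw [List.getLast?_append, h5] at hee
    simpa using hee
  obtain ⟨c, hcBo, hcr⟩ := hsepo _ hr hrA
  rcases List.mem_append.mp hcr with hcq | hcl₂
  · have hqne : q ≠ [] := hq.1
    have hdec : q.dropLast ++ [q.getLast hqne] = q := List.dropLast_append_getLast hqne
    have hgl : q.getLast hqne = ℓ := by
      have h6 := List.getLast?_eq_getLast (l := q) hqne
      rw [hqlast] at h6
      exact (Option.some.injEq _ _).mp h6.symm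
    rw [← hdec] at hcq
    rcases List.mem_append.mp hcq with h | h
    · exact hqavoid c h (hBoU hcBo)
    · simp only [List.mem_singleton] at h
      rw [h, hgl] at hcBo
      exact hℓo hcBo
  · exact hl₂ c hcl₂ (hBoU hcBo)

lemma mincut_le [Fintype E] {A B : Finset E} (hsep : Separates tl hd s A B) :
    mincut tl hd s A ≤ B.card := Nat.sInf_le ⟨B, hsep, rfl⟩

lemma sep_univ [Fintype E] (A : Finset E) : Separates tl hd s A Finset.univ :=
  fun p hp _ => ⟨p.head hp.1, Finset.mem_univ _, List.head_mem _⟩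

lemma exists_minCut [Fintype E] (A : Finset E) : ∃ C, IsMinCut tl hd s A C := by
  have hne : {n | ∃ B : Finset E, Separates tl hd s A B ∧ B.card = n}.Nonempty :=
    ⟨_, Finset.univ, sep_univ A, rfl⟩
  obtain ⟨B, h1, h2⟩ := Nat.sInf_mem hne
  exact ⟨B, h1, h2⟩

lemma frontier_minCut [Fintype E] [DecidableEq E] {A A' B₁ B₂ : Finset E}
    (h₁ : IsMinCut tl hd s A B₁) (hs₁ : Separates tl hd s A' B₁)
    (h₂ : IsMinCut tl hd s A' B₂) :
    IsMinCut tl hd s A (Frontier tl hd s (B₁ ∪ B₂)) := by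
  set F := Frontier tl hd s (B₁ ∪ B₂) with hF
  have hsepF : Separates tl hd s A F :=
    sep_frontier Finset.subset_union_left h₁.1
  have hsepJ : Separates tl hd s A' (((B₁ ∪ B₂) \ F) ∪ (B₁ ∩ B₂)) :=
    join_separates hs₁ h₂.1
  have c1 : mincut tl hd s A ≤ F.card := mincut_le hsepF
  have c2 := mincut_le hsepJ
  have c3 : (((B₁ ∪ B₂) \ F) ∪ (B₁ ∩ B₂)).card ≤
      ((B₁ ∪ B₂).card - F.card) + (B₁ ∩ B₂).card := by
    refine le_trans (Finset.card_union_le _ _) ?_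
    rw [Finset.card_sdiff_of_subset (frontier_subset _)]
  have c4 : F.card ≤ (B₁ ∪ B₂).card := Finset.card_le_card (frontier_subset _)
  have c5 := Finset.card_union_add_card_inter B₁ B₂
  have hb1 : B₁.card = mincut tl hd s A := h₁.2
  have hb2 : B₂.card = mincut tl hd s A' := h₂.2
  exact ⟨hsepF, by omega⟩

lemma exists_primary [Fintype E] (A : Finset E) :
    ∃ P, IsMinCut tl hd s A P ∧ ∀ C, IsMinCut tl hd s A C → Separates tl hd s C P := by
  classical
  suffices h : ∀ S : Finset (Finset E), ∃ P, IsMinCut tl hd s A P ∧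
      ∀ C ∈ S, IsMinCut tl hd s A C → Separates tl hd s C P by
    obtain ⟨P, h1, h2⟩ := h Finset.univ
    exact ⟨P, h1, fun C hC => h2 C (Finset.mem_univ C) hC⟩
  intro S
  induction S using Finset.induction_on with
  | empty =>
    obtain ⟨C₀, h⟩ := exists_minCut A
    exact ⟨C₀, h, by simp⟩
  | @insert a S' ha ih =>
    obtain ⟨P, hP, hsep⟩ := ih
    by_cases hc : IsMinCut tl hd s A a
    · refine ⟨Frontier tl hd s (P ∪ a), frontier_minCut hP hP.1 hc, ?_⟩
      intro C hC hCmin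
      rcases Finset.mem_insert.mp hC with rfl | hC'
      · exact sep_frontier Finset.subset_union_right (separates_self _)
      · exact sep_trans (hsep C hC' hCmin)
          (sep_frontier Finset.subset_union_left (separates_self _))
    · refine ⟨P, hP, ?_⟩
      intro C hC hCmin
      rcases Finset.mem_insert.mp hC with rfl | hC'
      · exact absurd hCmin hc
      · exact hsep C hC' hCmin

lemma equivSets_refl [Fintype E] (A : Finset E) : EquivSets tl hd s A A := by
  obtain ⟨C, h⟩ := exists_minCut (tl := tl) (hd := hd) (s := s) A
  exact ⟨C, h, h⟩

lemma equivSets_trans' [Fintype E] {A B C : Finset E}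
    (hAB : EquivSets tl hd s A B) (hAC : EquivSets tl hd s A C) :
    EquivSets tl hd s B C := by
  obtain ⟨C₁, h₁A, h₁B⟩ := hAB
  obtain ⟨C₂, h₂A, h₂C⟩ := hAC
  obtain ⟨P, hP, hPsep⟩ := exists_primary (tl := tl) (hd := hd) (s := s) A
  have sepB : Separates tl hd s B P := sep_trans h₁B.1 (hPsep C₁ h₁A)
  have sepC : Separates tl hd s C P := sep_trans h₂C.1 (hPsep C₂ h₂A)
  refine ⟨P, ⟨sepB, ?_⟩, ⟨sepC, ?_⟩⟩
  · rw [hP.2, ← h₁A.2, h₁B.2]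
  · rw [hP.2, ← h₂A.2, h₂C.2]

lemma key_lemma [Fintype E] [DecidableEq E] {A₂ P A₁ A₁' D₁ : Finset E}
    (hP : IsMinCut tl hd s A₂ P)
    (hPsep : ∀ C, IsMinCut tl hd s A₂ C → Separates tl hd s C P)
    (hPA₁ : Separates tl hd s A₁ P)
    (hD : IsMinCut tl hd s A₁ D₁) (hD' : IsMinCut tl hd s A₁' D₁) :
    Separates tl hd s A₁' P := by
  have hF : IsMinCut tl hd s A₂ (Frontier tl hd s (P ∪ D₁)) :=
    frontier_minCut hP hPA₁ hD
  have h1 : Separates tl hd s D₁ (Frontier tl hd s (P ∪ D₁)) :=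
    sep_frontier Finset.subset_union_right (separates_self D₁)
  exact sep_trans (sep_trans hD'.1 h1) (hPsep _ hF)

end Helpers

/-- `Cl(A₁) ≺ Cl(A₂)` iff `A₁ ≺ A₂`. -/
theorem clDominates_iff_dominates {V E : Type*} [Fintype E]
    (tl hd : E → V) (s : V)
    (hacy : Acyclic tl hd) (hsrc : ∀ e : E, hd e ≠ s)
    (𝒜 : Finset (Finset E)) (hreg : ∀ A ∈ 𝒜, Regular tl hd s A)
    (A₁ A₂ : Finset E) (hA₁ : A₁ ∈ 𝒜) (hA₂ : A₂ ∈ 𝒜) :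
    ClDominates tl hd s (ClassOf tl hd s 𝒜 A₁) (ClassOf tl hd s 𝒜 A₂) ↔
      Dominates tl hd s A₁ A₂ := by
  classical
  constructor
  · rintro ⟨hne, CUT, hmc, hsep⟩
    have hCUT₂ : IsMinCut tl hd s A₂ CUT := hmc A₂ ⟨hA₂, equivSets_refl A₂⟩
    have hCUT₁ : Separates tl hd s A₁ CUT := hsep A₁ ⟨hA₁, equivSets_refl A₁⟩
    have hle : A₁.card ≤ A₂.card := by
      rw [hreg A₁ hA₁, hreg A₂ hA₂, ← hCUT₂.2]
      exact mincut_le hCUT₁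
    refine ⟨lt_of_le_of_ne hle ?_, CUT, hCUT₂, hCUT₁⟩
    intro heq
    apply hne
    have hmc1 : IsMinCut tl hd s A₁ CUT :=
      ⟨hCUT₁, by rw [hCUT₂.2, ← hreg A₂ hA₂, ← heq, hreg A₁ hA₁]⟩
    have hEq : EquivSets tl hd s A₁ A₂ := ⟨CUT, hmc1, hCUT₂⟩
    have hEq' : EquivSets tl hd s A₂ A₁ := equivSets_trans' hEq (equivSets_refl A₁)
    ext A'
    simp only [ClassOf, Set.mem_setOf_eq]
    constructor
    · rintro ⟨h1, h2⟩; exact ⟨h1, equivSets_trans' hEq h2⟩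
    · rintro ⟨h1, h2⟩; exact ⟨h1, equivSets_trans' hEq' h2⟩
  · rintro ⟨hlt, C, hC, hCA₁⟩
    obtain ⟨P, hP, hPsep⟩ := exists_primary (tl := tl) (hd := hd) (s := s) A₂
    refine ⟨?_, P, ?_, ?_⟩
    · intro heqcl
      have hmem : A₁ ∈ ClassOf tl hd s 𝒜 A₂ := by
        rw [← heqcl]; exact ⟨hA₁, equivSets_refl A₁⟩
      obtain ⟨-, D, hD₂, hD₁⟩ := hmem
      have hcc : A₂.card = A₁.card := by
        rw [hreg A₂ hA₂, hreg A₁ hA₁, ← hD₂.2, hD₁.2]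
      omega
    · rintro A ⟨hmem, D, hDA₂, hDA⟩
      refine ⟨sep_trans hDA.1 (hPsep D hDA₂), ?_⟩
      rw [hP.2, ← hDA₂.2, hDA.2]
    · rintro A' ⟨hmem, D₁, hD₁A₁, hD₁A'⟩
      exact key_lemma hP hPsep (sep_trans hCA₁ (hPsep C hC)) hD₁A₁ hD₁A'
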